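/- For the three vectors of the column basis of the Fourier matrix F₃, each polarization vector p = (⟨v|Jx|v⟩, ⟨v|Jy|v⟩, ⟨v|Jz|v⟩) has norm 2√2/3, so each vector has 1-anticoherence measure 𝓐₁ = 1 - |p|²/j² with j = 1 equal to 1/9. -/

import Mathlib

open Matrix Complex

noncomputable def Jz1 : Matrix (Fin 3) (Fin 3) ℂ := diagonal ![1, 0, -1]

noncomputable def Jx1 : Matrix (Fin 3) (Fin 3) ℂ :=
  (1 / (Real.sqrt 2 : ℂ)) • !![0, 1, 0; 1, 0, 1; 0, 1, 0]

noncomputable def Jy1 : Matrix (Fin 3) (Fin 3) ℂ :=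
  (1 / (Real.sqrt 2 : ℂ)) • !![0, -I, 0; I, 0, -I; 0, I, 0]

/-- The k-th column of the Fourier matrix F₃. -/
noncomputable def fourierCol (k : Fin 3) : Fin 3 → ℂ :=
  fun j => Complex.exp (2 * Real.pi * Complex.I / 3) ^ ((j : ℕ) * (k : ℕ)) / Real.sqrt 3


lemma hc : Complex.exp (2 * Real.pi * Complex.I / 3)
    = -(1/2 : ℂ) + ((Real.sqrt 3 / 2 : ℝ) : ℂ) * I := by
  have h : (2 * Real.pi * Complex.I / 3) = ((2 * Real.pi / 3 : ℝ) : ℂ) * I := by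
    push_cast; ring
  have h23 : (2 * Real.pi / 3 : ℝ) = Real.pi - Real.pi / 3 := by ring
  have hcos : Real.cos (2 * Real.pi / 3) = -(1/2) := by
    rw [h23, Real.cos_pi_sub, Real.cos_pi_div_three]
  have hsin : Real.sin (2 * Real.pi / 3) = Real.sqrt 3 / 2 := by
    rw [h23, Real.sin_pi_sub, Real.sin_pi_div_three]
  rw [h, Complex.exp_mul_I, ← Complex.ofReal_cos, ← Complex.ofReal_sin, hcos, hsin]
  push_cast; ring

lemma hJz : Jz1 = !![(1:ℂ),0,0;0,0,0;0,0,-1] := by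
  unfold Jz1
  ext i j
  fin_cases i <;> fin_cases j <;> rfl

set_option maxHeartbeats 1000000 in
lemma key (k : Fin 3) :
    ‖star (fourierCol k) ⬝ᵥ Jx1.mulVec (fourierCol k)‖ ^ 2 +
    ‖star (fourierCol k) ⬝ᵥ Jy1.mulVec (fourierCol k)‖ ^ 2 +
    ‖star (fourierCol k) ⬝ᵥ Jz1.mulVec (fourierCol k)‖ ^ 2 = 8/9 := by
  have h3 : Real.sqrt 3 ^ 2 = 3 := Real.sq_sqrt (by norm_num)
  have h2 : Real.sqrt 2 ^ 2 = 2 := Real.sq_sqrt (by norm_num)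
  have k34 : Real.sqrt 3 ^ 4 = 9 := by nlinarith [h3]
  have k36 : Real.sqrt 3 ^ 6 = 27 := by nlinarith [h3, k34]
  have k38 : Real.sqrt 3 ^ 8 = 81 := by nlinarith [h3, k34, k36]
  have k310 : Real.sqrt 3 ^ 10 = 243 := by nlinarith [h3, k34, k36, k38]
  have k312 : Real.sqrt 3 ^ 12 = 729 := by nlinarith [h3, k34, k36, k38, k310]
  have p12 : Real.sqrt 3 ^ 12 * Real.sqrt 2 ^ 2 = 1458 := by nlinarith [k312, h2]
  have k314 : Real.sqrt 3 ^ 14 = 2187 := by nlinarith [h3, k312]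
  have k316 : Real.sqrt 3 ^ 16 = 6561 := by nlinarith [h3, k314]
  have k318 : Real.sqrt 3 ^ 18 = 19683 := by nlinarith [h3, k316]
  have k320 : Real.sqrt 3 ^ 20 = 59049 := by nlinarith [h3, k318]
  have p14 : Real.sqrt 3 ^ 14 * Real.sqrt 2 ^ 2 = 4374 := by nlinarith [k314, h2]
  have p16 : Real.sqrt 3 ^ 16 * Real.sqrt 2 ^ 2 = 13122 := by nlinarith [k316, h2]
  have p4 : Real.sqrt 3 ^ 4 * Real.sqrt 2 ^ 2 = 18 := by rw [k34, h2]; norm_num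
  have p6 : Real.sqrt 3 ^ 6 * Real.sqrt 2 ^ 2 = 54 := by rw [k36, h2]; norm_num
  have p8 : Real.sqrt 3 ^ 8 * Real.sqrt 2 ^ 2 = 162 := by rw [k38, h2]; norm_num
  have p10 : Real.sqrt 3 ^ 10 * Real.sqrt 2 ^ 2 = 486 := by rw [k310, h2]; norm_num
  fin_cases k <;>
  · simp only [Complex.sq_norm]
    simp only [fourierCol, Jx1, Jy1, hJz, Matrix.mulVec, dotProduct, Fin.sum_univ_three,
      Pi.star_apply, RCLike.star_def, Matrix.smul_apply, Matrix.cons_val',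
      Matrix.cons_val_zero, Matrix.cons_val_one, Matrix.head_cons, Matrix.empty_val',
      Matrix.cons_val_fin_one, Matrix.head_fin_const, smul_eq_mul, Fin.isValue]
    norm_num [hc, map_add, map_neg, _root_.map_mul, map_div₀, _root_.map_one, map_ofNat, Complex.conj_I,
      Complex.conj_ofReal, Complex.normSq_apply, Complex.add_re, Complex.add_im,
      Complex.mul_re, Complex.mul_im, Complex.I_re, Complex.I_im, Complex.ofReal_re,
      Complex.ofReal_im, Complex.neg_re, Complex.neg_im, Complex.sub_re, Complex.sub_im,
      Complex.one_re, Complex.one_im, Complex.div_re, Complex.div_im, Complex.inv_re,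
      Complex.inv_im, Complex.normSq, pow_succ, pow_zero, Matrix.vecHead, Matrix.vecTail, Function.comp, Matrix.cons_val_two]
    ring_nf
    linarith [k34, k36, k38, k310, k312, k314, k316, k318, k320, h2, p4, p6, p8, p10, p12, p14, p16]

theorem fourierBasis3_anticoherence_one_ninth (k : Fin 3) :
    let v := fourierCol k
    let px := star v ⬝ᵥ Jx1.mulVec v
    let py := star v ⬝ᵥ Jy1.mulVec v
    let pz := star v ⬝ᵥ Jz1.mulVec v
    Real.sqrt (‖px‖ ^ 2 + ‖py‖ ^ 2 + ‖pz‖ ^ 2)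
        = 2 * Real.sqrt 2 / 3 ∧
      1 - (‖px‖ ^ 2 + ‖py‖ ^ 2 + ‖pz‖ ^ 2) = 1 / 9 := by
  intro v px py pz
  constructor
  · show Real.sqrt (‖star (fourierCol k) ⬝ᵥ Jx1.mulVec (fourierCol k)‖ ^ 2 +
        ‖star (fourierCol k) ⬝ᵥ Jy1.mulVec (fourierCol k)‖ ^ 2 +
        ‖star (fourierCol k) ⬝ᵥ Jz1.mulVec (fourierCol k)‖ ^ 2) = 2 * Real.sqrt 2 / 3
    rw [key k]
    rw [show (8/9 : ℝ) = (2 * Real.sqrt 2 / 3)^2 by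
      have h2 : Real.sqrt 2 ^ 2 = 2 := Real.sq_sqrt (by norm_num)
      nlinarith [h2]]
    exact Real.sqrt_sq (by positivity)
  · show 1 - (‖star (fourierCol k) ⬝ᵥ Jx1.mulVec (fourierCol k)‖ ^ 2 +
        ‖star (fourierCol k) ⬝ᵥ Jy1.mulVec (fourierCol k)‖ ^ 2 +
        ‖star (fourierCol k) ⬝ᵥ Jz1.mulVec (fourierCol k)‖ ^ 2) = 1 / 9
    rw [key k]
    norm_num
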